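/- For the monomial bases: let b₀,…,b_r denote the canonical monomial basis of Sym^d(W*) and b₀*,…,b_r* its dual basis under the apolarity pairing D. Then for every f ∈ Sym^{kd}(W*), one has ((kd)!/d!^k) · f = ∑_{0 ≤ i₁,…,i_k ≤ r} D(b_{i₁}* ⋯ b_{i_k}*, f) · b_{i₁} ⋯ b_{i_k}. -/

import Mathlib

open MvPolynomial

noncomputable section

def derivOp (K : Type*) [Field K] {σ : Type*} [Fintype σ] [DecidableEq σ]
    (a : σ →₀ ℕ) : Module.End K (MvPolynomial σ K) :=
  (Finset.univ.toList.map fun j : σ => ((MvPolynomial.pderiv j).toLinearMap ^ (a j))).prod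

def apol {K : Type*} [Field K] {σ : Type*} [Fintype σ] [DecidableEq σ]
    (u P : MvPolynomial σ K) : MvPolynomial σ K :=
  ∑ a ∈ u.support, u.coeff a • derivOp K a P

def apolS {K : Type*} [Field K] {σ : Type*} [Fintype σ] [DecidableEq σ]
    (u P : MvPolynomial σ K) : K :=
  MvPolynomial.constantCoeff (apol u P)

def MonIdx (m d : ℕ) : Type := {v : Fin m → ℕ // v ∈ Finset.Nat.antidiagonalTuple m d}

instance (m d : ℕ) : Fintype (MonIdx m d) := by unfold MonIdx; infer_instance
instance (m d : ℕ) : DecidableEq (MonIdx m d) := by unfold MonIdx; infer_instance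

def bmon (K : Type*) [Field K] {m d : ℕ} (v : MonIdx m d) : MvPolynomial (Fin m) K :=
  monomial (Finsupp.equivFunOnFinite.symm v.1) 1

/-- Dual basis of the monomial basis: `b_v* = (1/∏ v_j!) w^v`. -/
def bstarMon (K : Type*) [Field K] {m d : ℕ} (v : MonIdx m d) : MvPolynomial (Fin m) K :=
  (((∏ j, Nat.factorial (v.1 j) : ℕ) : K))⁻¹ • bmon K v

section Aux

set_option linter.unusedSectionVars false
set_option maxHeartbeats 1000000

variable {K : Type*} [Field K] {σ : Type*} [Fintype σ] [DecidableEq σ]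

lemma pderiv_pow_monomial (j : σ) (m : ℕ) (b : σ →₀ ℕ) (c : K) :
    (((MvPolynomial.pderiv j).toLinearMap ^ m)) (monomial b c)
      = monomial (b - Finsupp.single j m) (((b j).descFactorial m : K) * c) := by
  induction m generalizing b c with
  | zero => simp
  | succ m ih =>
    rw [pow_succ, Module.End.mul_apply]
    rw [show ((pderiv j).toLinearMap : MvPolynomial σ K →ₗ[K] _) (monomial b c)
        = pderiv j (monomial b c) from rfl, pderiv_monomial, ih]
    rw [tsub_tsub, ← Finsupp.single_add, Nat.add_comm 1 m]
    congr 1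
    rw [Finsupp.tsub_apply, Finsupp.single_eq_same]
    rcases Nat.eq_zero_or_pos (b j) with h | h
    · simp [h]
    · obtain ⟨n, hn⟩ := Nat.exists_eq_add_of_lt h
      rw [hn]
      simp only [zero_add, Nat.add_sub_cancel]
      rw [Nat.succ_descFactorial_succ]
      push_cast
      ring

lemma list_sum_single_apply (a : σ →₀ ℕ) (L : List σ) (j : σ) (hj : j ∉ L) :
    ((L.map fun i => Finsupp.single i (a i)).sum) j = 0 := by
  induction L with
  | nil => simp
  | cons i L ih =>
    simp only [List.map_cons, List.sum_cons, Finsupp.add_apply]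
    rw [ih (by simp at hj; tauto), Finsupp.single_apply, if_neg (by simp at hj; tauto), add_zero]

lemma derivOp_list (L : List σ) (hL : L.Nodup) (a : σ →₀ ℕ) (b : σ →₀ ℕ) (c : K) :
    (L.map fun j => ((MvPolynomial.pderiv j).toLinearMap ^ (a j))).prod (monomial b c)
      = monomial (b - (L.map fun j => Finsupp.single j (a j)).sum)
          (((L.map fun j => (b j).descFactorial (a j)).prod : ℕ) * c) := by
  induction L with
  | nil => simp
  | cons j L ih =>
    simp only [List.map_cons, List.prod_cons, List.sum_cons, Module.End.mul_apply]
    rw [ih (List.nodup_cons.mp hL).2, pderiv_pow_monomial]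
    have hS : (b - (L.map fun j => Finsupp.single j (a j)).sum) j = b j := by
      rw [Finsupp.tsub_apply, list_sum_single_apply a L j (List.nodup_cons.mp hL).1]; omega
    rw [hS, tsub_tsub, add_comm]
    congr 1
    push_cast
    ring

lemma derivOp_monomial (a b : σ →₀ ℕ) (c : K) :
    derivOp K a (monomial b c)
      = monomial (b - a) (((∏ j, (b j).descFactorial (a j) : ℕ) : K) * c) := by
  rw [derivOp, derivOp_list _ (Finset.nodup_toList _)]
  congr 1
  · rw [Finset.sum_map_toList, Finsupp.univ_sum_single]
  · rw [Finset.prod_map_toList]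

lemma apolS_monomial (a b : σ →₀ ℕ) (c c' : K) :
    apolS (monomial a c) (monomial b c')
      = if b = a then ((∏ j, (a j).factorial : ℕ) : K) * (c * c') else 0 := by
  classical
  rcases eq_or_ne c 0 with rfl | hc
  · rw [apolS, apol]
    simp only [monomial_zero, MvPolynomial.support_zero]
    simp
  · rw [apolS, apol, support_monomial, if_neg hc, Finset.sum_singleton, coeff_monomial,
      if_pos rfl, derivOp_monomial, smul_monomial, smul_eq_mul, constantCoeff_monomial]
    rcases eq_or_ne b a with rfl | hba
    · rw [if_pos rfl, if_pos (tsub_self b)]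
      simp only [Nat.descFactorial_self]
      ring
    · rw [if_neg hba]
      by_cases hba2 : b - a = 0
      · rw [if_pos hba2]
        have : ∃ j, b j < a j := by
          by_contra h
          push_neg at h
          exact hba (le_antisymm (tsub_eq_zero_iff_le.mp hba2) (Finsupp.le_def.mpr h))
        obtain ⟨j, hj⟩ := this
        have : (∏ j, (b j).descFactorial (a j)) = 0 :=
          Finset.prod_eq_zero (Finset.mem_univ j) (Nat.descFactorial_eq_zero_iff_lt.mpr hj)
        rw [this]
        simp
      · rw [if_neg hba2]

lemma apol_eq_linearMap (u : MvPolynomial σ K) (P : MvPolynomial σ K) :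
    apol u P = (∑ a ∈ u.support, u.coeff a • derivOp K a : Module.End K (MvPolynomial σ K)) P := by
  rw [apol, LinearMap.sum_apply]
  simp only [LinearMap.smul_apply]

lemma apolS_sum {ι : Type*} (u : MvPolynomial σ K) (S : Finset ι) (f : ι → MvPolynomial σ K) :
    apolS u (∑ b ∈ S, f b) = ∑ b ∈ S, apolS u (f b) := by
  simp only [apolS, apol_eq_linearMap, map_sum]

lemma prod_monomial {ι : Type*} {R : Type*} [CommSemiring R] (s : Finset ι)
    (f : ι → (σ →₀ ℕ)) (c : ι → R) :
    ∏ i ∈ s, (monomial (f i) (c i) : MvPolynomial σ R)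
      = monomial (∑ i ∈ s, f i) (∏ i ∈ s, c i) := by
  classical
  induction s using Finset.induction_on with
  | empty => simp [MvPolynomial.monomial_zero']
  | insert _ _ h ih => rw [Finset.prod_insert h, Finset.sum_insert h, Finset.prod_insert h, ih,
      monomial_mul]

lemma sum_single_eq_symm (g : σ → ℕ) :
    (∑ i : σ, Finsupp.single i (g i)) = Finsupp.equivFunOnFinite.symm g := by
  ext j
  rw [Finsupp.finset_sum_apply]
  simp [Finsupp.single_apply]

lemma coeff_sum_X_pow {R : Type*} [CommSemiring R] (m : ℕ) (b : σ →₀ ℕ) :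
    coeff b ((∑ i : σ, X i : MvPolynomial σ R) ^ m)
      = if ∑ i, b i = m then (Nat.multinomial Finset.univ ⇑b : R) else 0 := by
  rw [Finset.sum_pow_eq_sum_piAntidiag]
  have hmon : ∀ g : σ → ℕ, (∏ i : σ, (X i : MvPolynomial σ R) ^ g i)
      = monomial (Finsupp.equivFunOnFinite.symm g) 1 := by
    intro g
    simp_rw [X_pow_eq_monomial]
    rw [prod_monomial, sum_single_eq_symm, Finset.prod_const_one]
  simp_rw [hmon]
  have hterm : ∀ g : σ → ℕ,
      coeff b ((Nat.multinomial Finset.univ g : MvPolynomial σ R)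
          * monomial (Finsupp.equivFunOnFinite.symm g) 1)
        = if g = ⇑b then (Nat.multinomial Finset.univ g : R) else 0 := by
    intro g
    rw [← map_natCast (C : R →+* MvPolynomial σ R), coeff_C_mul, coeff_monomial]
    have hiff : (Finsupp.equivFunOnFinite.symm g = b) ↔ g = ⇑b := by
      constructor
      · rintro rfl; exact (Equiv.apply_symm_apply Finsupp.equivFunOnFinite g).symm
      · rintro h; rw [h]; exact Finsupp.equivFunOnFinite_symm_coe b
    split_ifs with h1 h2 h2
    · rw [mul_one]
    · exact absurd (hiff.mp h1) h2
    · exact absurd (hiff.mpr h2) h1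
    · rw [mul_zero]
  rw [MvPolynomial.coeff_sum]
  simp_rw [hterm]
  rw [Finset.sum_ite_eq' (Finset.piAntidiag Finset.univ m) (⇑b)
      (fun g => (Nat.multinomial Finset.univ g : R))]
  congr 1
  simp only [Finset.mem_piAntidiag, eq_iff_iff]
  constructor
  · rintro ⟨h, -⟩; exact h
  · intro h; exact ⟨h, fun i _ => Finset.mem_univ i⟩

lemma keyNat (n d k : ℕ) (b : Fin (n+1) →₀ ℕ) (hb : ∑ i, b i = k*d) :
    Nat.multinomial Finset.univ ⇑b
      = ∑ t : Fin k → MonIdx (n+1) d,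
          if (∑ l, Finsupp.equivFunOnFinite.symm ((t l).1)) = b
          then ∏ l, Nat.multinomial Finset.univ ((t l).1) else 0 := by
  classical
  set P : MvPolynomial (Fin (n+1)) ℕ := ∑ i, X i with hP
  have h1 : Nat.multinomial Finset.univ ⇑b = coeff b (P ^ (k*d)) := by
    rw [coeff_sum_X_pow, if_pos hb, Nat.cast_id]
  have h2 : P ^ (k*d) = ∏ _l : Fin k, P ^ d := by
    rw [Finset.prod_const, Finset.card_univ, Fintype.card_fin, ← pow_mul, Nat.mul_comm]
  have h3 : coeff b (∏ _l : Fin k, P ^ d)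
      = ∑ w ∈ Finset.finsuppAntidiag (Finset.univ : Finset (Fin k)) b,
          ∏ l, coeff (w l) (P ^ d) := by
    have hcoe : (↑(∏ _l : Fin k, P ^ d) : MvPowerSeries (Fin (n+1)) ℕ)
        = ∏ _l : Fin k, (↑(P ^ d) : MvPowerSeries (Fin (n+1)) ℕ) := by
      rw [← MvPolynomial.coeToMvPowerSeries.ringHom_apply, map_prod]
      simp [MvPolynomial.coeToMvPowerSeries.ringHom_apply]
    have := MvPowerSeries.coeff_prod
      (fun _l : Fin k => (↑(P ^ d) : MvPowerSeries (Fin (n+1)) ℕ)) b Finset.univ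
    rw [← hcoe, MvPolynomial.coeff_coe] at this
    rw [this]
    simp only [← MvPolynomial.coe_pow, MvPolynomial.coeff_coe]
  rw [h1, h2, h3]
  have h4 : ∀ w : Fin k →₀ (Fin (n+1) →₀ ℕ), (∏ l, coeff (w l) (P ^ d))
      = if ∀ l : Fin k, l ∈ Finset.univ → (∑ j, w l j = d)
        then ∏ l, Nat.multinomial Finset.univ ⇑(w l) else 0 := by
    intro w
    have : ∀ l : Fin k, coeff (w l) (P ^ d)
        = if ∑ j, w l j = d then Nat.multinomial Finset.univ ⇑(w l) else 0 := by
      intro l; rw [coeff_sum_X_pow, Nat.cast_id]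
    simp_rw [this, Finset.prod_ite_zero]
    congr
  simp_rw [h4]
  rw [Finset.sum_ite, Finset.sum_const_zero, add_zero]
  rw [show (∑ t : Fin k → MonIdx (n+1) d,
      if (∑ l, Finsupp.equivFunOnFinite.symm ((t l).1)) = b
      then ∏ l, Nat.multinomial Finset.univ ((t l).1) else 0)
    = ∑ t ∈ Finset.univ.filter (fun t : Fin k → MonIdx (n+1) d =>
        (∑ l, Finsupp.equivFunOnFinite.symm ((t l).1)) = b),
        ∏ l, Nat.multinomial Finset.univ ((t l).1) from (Finset.sum_filter _ _).symm]
  refine Finset.sum_bij'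
    (fun w hw => fun l => (⟨⇑(w l), Finset.Nat.mem_antidiagonalTuple.mpr ?_⟩ : MonIdx (n+1) d))
    (fun t ht => Finsupp.equivFunOnFinite.symm
      (fun l => Finsupp.equivFunOnFinite.symm ((t l).1)))
    ?_ ?_ ?_ ?_ ?_
  · simp only [Finset.mem_filter] at hw
    exact hw.2 l (Finset.mem_univ l)
  · intro w hw
    refine Finset.mem_filter.mpr ⟨Finset.mem_univ _, ?_⟩
    simp only [Finset.mem_filter, Finset.mem_finsuppAntidiag] at hw
    simp only [Finsupp.equivFunOnFinite_symm_coe]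
    exact hw.1.1
  · intro t ht
    simp only [Finset.mem_filter, Finset.mem_univ, true_and] at ht
    simp only [Finset.mem_filter, Finset.mem_finsuppAntidiag]
    refine ⟨⟨?_, ?_⟩, ?_⟩
    · rw [← ht]
      congr 1
    · exact Finset.subset_univ _
    · intro l _
      have := Finset.Nat.mem_antidiagonalTuple.mp (t l).2
      simpa using this
  · intro w hw
    ext l j
    simp [Finsupp.equivFunOnFinite_symm_coe]
  · intro t ht
    funext l
    apply Subtype.ext
    show ⇑(Finsupp.equivFunOnFinite.symm ((t l).1)) = (t l).1
    exact (Equiv.apply_symm_apply Finsupp.equivFunOnFinite _)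
  · intro w hw
    rfl

end Aux

section Aux2
set_option linter.unusedSectionVars false
set_option maxHeartbeats 1000000

lemma fact_cast_ne_zero {K : Type*} [Field K] {N : ℕ}
    (hchar : ∀ i : ℕ, 0 < i → i ≤ N → (i : K) ≠ 0) {m : ℕ} (hm : m ≤ N) :
    ((m.factorial : K)) ≠ 0 := by
  induction m with
  | zero => simp
  | succ m ih =>
    rw [Nat.factorial_succ, Nat.cast_mul]
    exact mul_ne_zero (hchar (m+1) (Nat.succ_pos m) hm) (ih (le_trans (Nat.le_succ m) hm))

lemma keyK (K : Type*) [Field K] (n d k : ℕ) (hk : 1 ≤ k)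
    (hchar : ∀ i : ℕ, 0 < i → i ≤ k * d → (i : K) ≠ 0)
    (b : Fin (n+1) →₀ ℕ) (hb : ∑ i, b i = k*d) :
    ((k*d).factorial : K) / ((d.factorial : K))^k
      = ∑ t : Fin k → MonIdx (n+1) d,
          if (∑ l, Finsupp.equivFunOnFinite.symm ((t l).1)) = b
          then ((∏ j, ((b j).factorial) : ℕ) : K)
            * ∏ l, (((∏ j, (((t l).1 j).factorial) : ℕ) : K))⁻¹
          else 0 := by
  classical
  have hdk : d ≤ k*d := Nat.le_mul_of_pos_left d hk
  have hfd : ((d.factorial : K)) ≠ 0 := fact_cast_ne_zero hchar hdk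
  have hfdk : (((d.factorial : K))^k) ≠ 0 := pow_ne_zero _ hfd
  have hB : ((∏ j, ((b j).factorial) : ℕ) : K) ≠ 0 := by
    rw [Nat.cast_prod]
    refine Finset.prod_ne_zero_iff.mpr fun j _ => ?_
    refine fact_cast_ne_zero hchar ?_
    calc b j ≤ ∑ i, b i := Finset.single_le_sum (fun i _ => Nat.zero_le _) (Finset.mem_univ j)
    _ = k*d := hb
  have hC : ∀ v : MonIdx (n+1) d, ((∏ j, ((v.1 j).factorial) : ℕ) : K) ≠ 0 := by
    intro v
    rw [Nat.cast_prod]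
    refine Finset.prod_ne_zero_iff.mpr fun j _ => ?_
    refine fact_cast_ne_zero hchar ?_
    have hv := Finset.Nat.mem_antidiagonalTuple.mp v.2
    calc v.1 j ≤ ∑ i, v.1 i := Finset.single_le_sum (fun i _ => Nat.zero_le _) (Finset.mem_univ j)
    _ = d := hv
    _ ≤ k*d := hdk
  -- multinomial values
  have hBspec : ((∏ j, ((b j).factorial) : ℕ) : K) * (Nat.multinomial Finset.univ ⇑b : K)
      = (((k*d).factorial : K)) := by
    have := Nat.multinomial_spec (Finset.univ : Finset (Fin (n+1))) ⇑b
    rw [hb] at this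
    exact_mod_cast congrArg (Nat.cast : ℕ → K) this
  have hCspec : ∀ v : MonIdx (n+1) d,
      ((∏ j, ((v.1 j).factorial) : ℕ) : K) * (Nat.multinomial Finset.univ v.1 : K)
        = ((d.factorial : K)) := by
    intro v
    have hv := Finset.Nat.mem_antidiagonalTuple.mp v.2
    have := Nat.multinomial_spec (Finset.univ : Finset (Fin (n+1))) v.1
    rw [hv] at this
    exact_mod_cast congrArg (Nat.cast : ℕ → K) this
  have hmultb : (Nat.multinomial Finset.univ ⇑b : K)
      = (((k*d).factorial : K)) * (((∏ j, ((b j).factorial) : ℕ) : K))⁻¹ := by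
    rw [← hBspec, mul_comm (((∏ j, ((b j).factorial) : ℕ) : K)), mul_assoc, mul_inv_cancel₀ hB, mul_one]
  have hmultv : ∀ v : MonIdx (n+1) d, (Nat.multinomial Finset.univ v.1 : K)
      = ((d.factorial : K)) * (((∏ j, ((v.1 j).factorial) : ℕ) : K))⁻¹ := by
    intro v
    rw [← hCspec v, mul_comm (((∏ j, ((v.1 j).factorial) : ℕ) : K)), mul_assoc, mul_inv_cancel₀ (hC v), mul_one]
  have hcast := congrArg (Nat.cast : ℕ → K) (keyNat n d k b hb)
  rw [Nat.cast_sum] at hcast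
  simp only [apply_ite (Nat.cast : ℕ → K), Nat.cast_prod, Nat.cast_zero] at hcast
  rw [hmultb] at hcast
  have hprod : ∀ t : Fin k → MonIdx (n+1) d,
      (∏ l, (Nat.multinomial Finset.univ ((t l).1) : K))
        = ((d.factorial : K))^k * ∏ l, (((∏ j, (((t l).1 j).factorial) : ℕ) : K))⁻¹ := by
    intro t
    calc (∏ l, (Nat.multinomial Finset.univ ((t l).1) : K))
        = ∏ l, ((d.factorial : K) * (((∏ j, (((t l).1 j).factorial) : ℕ) : K))⁻¹) :=
          Finset.prod_congr rfl fun l _ => hmultv (t l)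
      _ = (∏ _l : Fin k, (d.factorial : K))
            * ∏ l, (((∏ j, (((t l).1 j).factorial) : ℕ) : K))⁻¹ := Finset.prod_mul_distrib
      _ = ((d.factorial : K))^k * ∏ l, (((∏ j, (((t l).1 j).factorial) : ℕ) : K))⁻¹ := by
          rw [Finset.prod_const, Finset.card_univ, Fintype.card_fin]
  calc ((k*d).factorial : K) / ((d.factorial : K))^k
      = (((∏ j, ((b j).factorial) : ℕ) : K) * (((d.factorial : K))^k)⁻¹)
        * ((((k*d).factorial : K)) * (((∏ j, ((b j).factorial) : ℕ) : K))⁻¹) := by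
        rw [div_eq_mul_inv, show (((∏ j, ((b j).factorial) : ℕ) : K) * (((d.factorial : K))^k)⁻¹)
            * ((((k*d).factorial : K)) * (((∏ j, ((b j).factorial) : ℕ) : K))⁻¹)
          = ((((k*d).factorial : K)) * (((d.factorial : K))^k)⁻¹)
            * ((((∏ j, ((b j).factorial) : ℕ) : K)) * (((∏ j, ((b j).factorial) : ℕ) : K))⁻¹)
          from by ring, mul_inv_cancel₀ hB, mul_one]
    _ = (((∏ j, ((b j).factorial) : ℕ) : K) * (((d.factorial : K))^k)⁻¹)
        * ∑ t : Fin k → MonIdx (n+1) d,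
            if (∑ l, Finsupp.equivFunOnFinite.symm ((t l).1)) = b
            then ∏ l, (Nat.multinomial Finset.univ ((t l).1) : K) else 0 := by rw [← hcast]
    _ = _ := by
        rw [Finset.mul_sum]
        refine Finset.sum_congr rfl fun t _ => ?_
        rw [hprod t]
        split_ifs with h
        · rw [show (((∏ j, ((b j).factorial) : ℕ) : K) * (((d.factorial : K))^k)⁻¹)
              * (((d.factorial : K))^k * ∏ l, (((∏ j, (((t l).1 j).factorial) : ℕ) : K))⁻¹)
            = (((∏ j, ((b j).factorial) : ℕ) : K)
                * ∏ l, (((∏ j, (((t l).1 j).factorial) : ℕ) : K))⁻¹)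
              * ((((d.factorial : K))^k)⁻¹ * ((d.factorial : K))^k) from by ring,
            inv_mul_cancel₀ hfdk, mul_one]
        · rw [mul_zero]

lemma main_mono (K : Type*) [Field K] (n d k : ℕ) (hk : 1 ≤ k)
    (hchar : ∀ i : ℕ, 0 < i → i ≤ k * d → (i : K) ≠ 0)
    (b : Fin (n+1) →₀ ℕ) (hb : ∑ i, b i = k*d) (c : K) :
    ((Nat.factorial (k * d) : K) / (Nat.factorial d : K) ^ k) • (monomial b c : MvPolynomial (Fin (n+1)) K)
      = ∑ t : Fin k → MonIdx (n + 1) d,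
          apolS (∏ l, bstarMon K (t l)) (monomial b c) • ∏ l, bmon K (t l) := by
  classical
  have hstar : ∀ t : Fin k → MonIdx (n+1) d, (∏ l, bstarMon K (t l))
      = monomial (∑ l, Finsupp.equivFunOnFinite.symm ((t l).1))
          (∏ l, (((∏ j, (((t l).1 j).factorial) : ℕ) : K))⁻¹) := by
    intro t
    unfold bstarMon bmon
    simp_rw [smul_monomial, smul_eq_mul, mul_one]
    rw [prod_monomial]
  have hbm : ∀ t : Fin k → MonIdx (n+1) d, (∏ l, bmon K (t l))
      = monomial (∑ l, Finsupp.equivFunOnFinite.symm ((t l).1)) (1 : K) := by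
    intro t
    unfold bmon
    rw [prod_monomial, Finset.prod_const_one]
  have hterm : ∀ t : Fin k → MonIdx (n+1) d,
      apolS (∏ l, bstarMon K (t l)) (monomial b c) • ∏ l, bmon K (t l)
        = monomial b (if (∑ l, Finsupp.equivFunOnFinite.symm ((t l).1)) = b
            then (((∏ j, ((b j).factorial) : ℕ) : K)
              * ∏ l, (((∏ j, (((t l).1 j).factorial) : ℕ) : K))⁻¹) * c
            else 0) := by
    intro t
    rw [hstar, hbm, apolS_monomial]
    by_cases h : (∑ l, Finsupp.equivFunOnFinite.symm ((t l).1)) = b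
    · rw [if_pos h, if_pos h.symm, h, smul_monomial, smul_eq_mul, mul_one]
      congr 1
      ring
    · rw [if_neg h, if_neg (fun hh => h hh.symm), zero_smul, (monomial b).map_zero]
  simp_rw [hterm]
  rw [← map_sum (monomial b : K →ₗ[K] MvPolynomial (Fin (n+1)) K), smul_monomial, smul_eq_mul]
  congr 1
  rw [keyK K n d k hk hchar b hb, Finset.sum_mul]
  refine Finset.sum_congr rfl fun t _ => ?_
  split_ifs with h
  · rfl
  · rw [zero_mul]

end Aux2

/-- Taylor-like identity for the canonical monomial basis
`b₀,…,b_r` of `Sym^d(W*)` with dual basis `b₀*,…,b_r*`: for every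
`f ∈ Sym^{kd}(W*)`,
`((kd)!/d!^k)·f = ∑_{i₁,…,i_k} D(b_{i₁}*⋯b_{i_k}*, f)·b_{i₁}⋯b_{i_k}`. -/
theorem taylor_identity_monomial_basis
    (K : Type*) [Field K] (n d k : ℕ) (hd : 1 ≤ d) (hk : 1 ≤ k)
    (hchar : ∀ i : ℕ, 0 < i → i ≤ k * d → (i : K) ≠ 0)
    (f : MvPolynomial (Fin (n + 1)) K) (hf : f.IsHomogeneous (k * d)) :
    ((Nat.factorial (k * d) : K) / (Nat.factorial d : K) ^ k) • f
      = ∑ t : Fin k → MonIdx (n + 1) d,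
          apolS (∏ l, bstarMon K (t l)) f • ∏ l, bmon K (t l) := by
  classical
  conv_lhs => rw [← support_sum_monomial_coeff f]
  have hR : ∀ t : Fin k → MonIdx (n+1) d,
      apolS (∏ l, bstarMon K (t l)) f • ∏ l, bmon K (t l)
        = ∑ b ∈ f.support,
            apolS (∏ l, bstarMon K (t l)) (monomial b (coeff b f)) • ∏ l, bmon K (t l) := by
    intro t
    conv_lhs => rw [← support_sum_monomial_coeff f]
    rw [apolS_sum, Finset.sum_smul]
  rw [Finset.sum_congr rfl fun t _ => hR t, Finset.smul_sum, Finset.sum_comm]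
  refine Finset.sum_congr rfl fun b hb => ?_
  have hdeg : ∑ i, b i = k * d := by
    have h1 : b.degree = k * d := by
      by_contra h
      exact (mem_support_iff.mp hb) (hf.coeff_eq_zero h)
    rw [← h1, Finsupp.degree]
    exact (Finset.sum_subset (Finset.subset_univ _)
      (fun i _ hi => Finsupp.notMem_support_iff.mp hi)).symm
  exact main_mono K n d k hk hchar b hdeg (coeff b f)
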